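/- Let d ≥ 1. Let Π be the SNP system with delays consisting of neurons σ1, σ2, σ3 and synapses (1,2), (2,1), (2,3), where σ1 initially holds one spike and has the single rule a → a (delay 0), σ2 has the single rule a → a; d, and σ3 is a sink neuron; σ1 and σ2 continuously replenish one another's spike, forming an infinite iterative loop, and the total runtime of Π (the time at which the sink first receives a spike) is 1 + d. Then there exists an SNP system without delays Π̄, containing an iterative loop of two neurons that replenish one another's spike, whose total runtime is 2 + d and whose sink neuron obtains exactly one spike at that time; hence Π̄ simulates the iterative routing of Π with a time offset of exactly 1. -/

import Mathlib

/-!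
Formalization of Spiking Neural P (SNP) systems with delays, following
Cabarle–Buño–Adorna, "Time After Time: Notes on Delays In Spiking Neural
P Systems".

A rule `E/a^c → a^b; d` is modelled by the set `lang ⊆ ℕ` of spike counts `k`
with `a^k ∈ L(E)`, together with `c`, `b` and the delay `d`.  Each neuron has
at most one rule (sink neurons, which never fire, have none).  A configuration
assigns to every neuron its spike count `n i` and its remaining closed time
`clk i`.  If a rule with delay `d` fires during the step leading to the
configuration at time `t`, the produced spikes become visible in the
configuration at time `t + d`; spikes sent to a closed neuron are lost.
The first rule application is counted as happening at time `0`, so the total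
runtime (time needed for a spike to arrive at the sink neurons from the source
neurons) is one less than the index of the first configuration in which all
sink neurons hold a spike.
-/

open scoped Classical

structure SNPRule where
  /-- the spike counts accepted by the regular expression `E` -/
  lang : Set ℕ
  c : ℕ
  b : ℕ
  d : ℕ
  c_pos : 1 ≤ c
  b_le_c : b ≤ c

/-- The rule `a^c → a^b; d` (whose regular expression is `E = a^c`). -/
def simpleRule (c b d : ℕ) (hc : 1 ≤ c) (hb : b ≤ c) : SNPRule :=
  ⟨{c}, c, b, d, hc, hb⟩

/-- The rule `a⁺/a → a` (no delay). -/
def plusRule : SNPRule :=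
  ⟨{k | 1 ≤ k}, 1, 1, 0, le_refl 1, le_refl 1⟩

/-- An SNP system of degree `m`: initial spike counts, (at most) one rule per
neuron, and an irreflexive synapse relation. -/
structure SNPSystem (m : ℕ) where
  init : Fin m → ℕ
  rule : Fin m → Option SNPRule
  syn : Fin m → Fin m → Prop
  syn_irrefl : ∀ i, ¬ syn i i

/-- A configuration: spike counts and remaining closed times. -/
structure SNPConfig (m : ℕ) where
  n : Fin m → ℕ
  clk : Fin m → ℕ

namespace SNPSystem

variable {m m' : ℕ}

/-- Neuron `i` is open and its rule is applicable in configuration `C`. -/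
def enabled (S : SNPSystem m) (C : SNPConfig m) (i : Fin m) : Prop :=
  C.clk i = 0 ∧ ∃ r, S.rule i = some r ∧ C.n i ∈ r.lang ∧ r.c ≤ C.n i

/-- Spikes emitted by neuron `i` during the current step: either its rule fires
with delay `0`, or its closed period (after firing a rule with delay `≥ 1`)
expires now. -/
noncomputable def emits (S : SNPSystem m) (C : SNPConfig m) (i : Fin m) : ℕ :=
  match S.rule i with
  | none => 0
  | some r =>
      if C.clk i = 0 ∧ C.n i ∈ r.lang ∧ r.c ≤ C.n i ∧ r.d = 0 then r.b
      else if C.clk i = 1 then r.b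
      else 0

/-- Spikes consumed by neuron `i` if its rule fires in the current step. -/
noncomputable def consumed (S : SNPSystem m) (C : SNPConfig m) (i : Fin m) : ℕ :=
  match S.rule i with
  | none => 0
  | some r => if C.clk i = 0 ∧ C.n i ∈ r.lang ∧ r.c ≤ C.n i then r.c else 0

/-- Remaining closed time of neuron `i` after the current step. -/
noncomputable def nextClk (S : SNPSystem m) (C : SNPConfig m) (i : Fin m) : ℕ :=
  match S.rule i with
  | none => C.clk i - 1
  | some r =>
      if C.clk i = 0 ∧ C.n i ∈ r.lang ∧ r.c ≤ C.n i then r.d else C.clk i - 1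

/-- Spikes sent towards neuron `j` during the current step. -/
noncomputable def sent (S : SNPSystem m) (C : SNPConfig m) (j : Fin m) : ℕ :=
  ∑ i, if S.syn i j then S.emits C i else 0

/-- Spikes actually received by neuron `j` during the current step (spikes sent
to a closed neuron are lost). -/
noncomputable def recv (S : SNPSystem m) (C : SNPConfig m) (j : Fin m) : ℕ :=
  if S.nextClk C j = 0 then S.sent C j else 0

/-- One (synchronized, global-clock) computation step. -/
noncomputable def step (S : SNPSystem m) (C : SNPConfig m) : SNPConfig m where
  n := fun i => C.n i - S.consumed C i + S.recv C i
  clk := fun i => S.nextClk C i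

/-- The initial configuration: all neurons open, spike counts given by `init`. -/
def initConfig (S : SNPSystem m) : SNPConfig m where
  n := S.init
  clk := fun _ => 0

/-- The configuration at time `t`. -/
noncomputable def conf (S : SNPSystem m) (t : ℕ) : SNPConfig m :=
  (S.step)^[t] S.initConfig

/-- A source neuron: no incoming synapses. -/
def isSource (S : SNPSystem m) (i : Fin m) : Prop :=
  ∀ j, ¬ S.syn j i

/-- A sink neuron: no outgoing synapses, and it never fires. -/
def isSink (S : SNPSystem m) (i : Fin m) : Prop :=
  (∀ j, ¬ S.syn i j) ∧ S.rule i = none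

/-- Total time needed for a spike to arrive at the sink neuron(s) from the
source neuron(s); the first rule application counts as happening at time `0`,
whence the `- 1`. -/
noncomputable def totalRuntime (S : SNPSystem m) : ℕ :=
  sInf {t | ∀ i, S.isSink i → 1 ≤ (S.conf t).n i} - 1

/-- The first time (counted as in `totalRuntime`) at which neuron `i` holds a
spike. -/
noncomputable def firstArrivalTime (S : SNPSystem m) (i : Fin m) : ℕ :=
  sInf {t | 1 ≤ (S.conf t).n i} - 1

/-- The first time (counted as in `totalRuntime`) at which neuron `i` spikes. -/
noncomputable def firstSpikeTime (S : SNPSystem m) (i : Fin m) : ℕ :=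
  sInf {t | 1 ≤ S.emits (S.conf t) i}

/-- An SNP system without delays: every rule has `d = 0`. -/
def delayFree (S : SNPSystem m) : Prop :=
  ∀ i r, S.rule i = some r → r.d = 0

/-- `T.Simulates S`: `T` has no delays; spikes arrive at the sink neurons of `T`
at the same time as at the sink neurons of `S` or offset by some constant
integer `k`; and the number of spikes arriving at the sink neurons of `T`
equals that for `S` or is a factor of one of the delays of `S`. -/
noncomputable def Simulates (T : SNPSystem m') (S : SNPSystem m) : Prop :=
  T.delayFree ∧
  (∃ k : ℤ, (T.totalRuntime : ℤ) = (S.totalRuntime : ℤ) + k) ∧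
  (∀ j, T.isSink j → ∀ i, S.isSink i →
    (T.conf (T.totalRuntime + 1)).n j = (S.conf (S.totalRuntime + 1)).n i ∨
    ∃ p r, S.rule p = some r ∧ (T.conf (T.totalRuntime + 1)).n j ∣ r.d)

/-- Sequential routing along a synapse `(i, j)`. -/
def sequentialAt (S : SNPSystem m) (i j : Fin m) : Prop :=
  S.syn i j

/-- Iterative routing: the two neurons form a loop. -/
def iterativeAt (S : SNPSystem m) (i j : Fin m) : Prop :=
  S.syn i j ∧ S.syn j i

/-- A split at neuron `i`: `i` sends its spike to at least two neurons. -/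
def splitAt (S : SNPSystem m) (i : Fin m) : Prop :=
  ∃ j k, j ≠ k ∧ S.syn i j ∧ S.syn i k

/-- A join at neuron `j`: at least two neurons send their spikes to `j`. -/
def joinAt (S : SNPSystem m) (j : Fin m) : Prop :=
  ∃ i k, i ≠ k ∧ S.syn i j ∧ S.syn k j

end SNPSystem

/-- The iterative system `Π` of the statement: `σ1` (one spike, rule `a → a`) and
`σ2` (rule `a → a; d`) form a loop, and `σ2` also feeds the sink `σ3`. -/
def iterPiB (d : ℕ) : SNPSystem 3 where
  init := ![1, 0, 0]
  rule := ![some (simpleRule 1 1 0 (le_refl 1) (le_refl 1)),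
            some (simpleRule 1 1 d (le_refl 1) (le_refl 1)), none]
  syn := fun i j =>
    (i.val = 0 ∧ j.val = 1) ∨ (i.val = 1 ∧ j.val = 0) ∨ (i.val = 1 ∧ j.val = 2)
  syn_irrefl := by intro i h; omega


section Exp
open SNPSystem
variable (d : ℕ)

lemma ext_config {m : ℕ} (C D : SNPConfig m) (h1 : C.n = D.n) (h2 : C.clk = D.clk) : C = D := by
  cases C; cases D; simp_all

lemma stepA (q : ℕ) (hd : 1 ≤ d) :
    (iterPiB d).step ⟨![1,0,q], ![0,0,0]⟩ = ⟨![0,1,q], ![0,0,0]⟩ := by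
  apply ext_config <;> funext i <;> fin_cases i <;>
    simp [SNPSystem.step, SNPSystem.consumed, SNPSystem.recv, SNPSystem.sent,
      SNPSystem.emits, SNPSystem.nextClk, iterPiB, simpleRule, Fin.sum_univ_three]

lemma stepB (q : ℕ) (hd : 1 ≤ d) :
    (iterPiB d).step ⟨![0,1,q], ![0,0,0]⟩ = ⟨![0,0,q], ![0,d,0]⟩ := by
  apply ext_config <;> funext i <;> fin_cases i <;>
    simp [SNPSystem.step, SNPSystem.consumed, SNPSystem.recv, SNPSystem.sent,
      SNPSystem.emits, SNPSystem.nextClk, iterPiB, simpleRule, Fin.sum_univ_three] <;> omega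

lemma stepC (q c : ℕ) (hc : 2 ≤ c) :
    (iterPiB d).step ⟨![0,0,q], ![0,c,0]⟩ = ⟨![0,0,q], ![0,c-1,0]⟩ := by
  have hc1 : c ≠ 1 := by omega
  apply ext_config <;> funext i <;> fin_cases i <;>
    simp [SNPSystem.step, SNPSystem.consumed, SNPSystem.recv, SNPSystem.sent,
      SNPSystem.emits, SNPSystem.nextClk, iterPiB, simpleRule, Fin.sum_univ_three, hc1] <;> omega

lemma stepD (q : ℕ) :
    (iterPiB d).step ⟨![0,0,q], ![0,1,0]⟩ = ⟨![1,0,q+1], ![0,0,0]⟩ := by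
  apply ext_config <;> funext i <;> fin_cases i <;>
    simp [SNPSystem.step, SNPSystem.consumed, SNPSystem.recv, SNPSystem.sent,
      SNPSystem.emits, SNPSystem.nextClk, iterPiB, simpleRule, Fin.sum_univ_three] <;> omega
end Exp

section Exp2
open SNPSystem
variable (d : ℕ)

/-- Delay-free simulator: 0 ↔ 1 loop, 1 → 2 (accumulator, fires at d+2 spikes), 2 → 3 (sink). -/
def Tsys (d : ℕ) : SNPSystem 4 where
  init := ![1, 1, 0, 0]
  rule := ![some (simpleRule 1 1 0 (le_refl 1) (le_refl 1)),
            some (simpleRule 1 1 0 (le_refl 1) (le_refl 1)),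
            some (simpleRule (d+2) 1 0 (by omega) (by omega)), none]
  syn := fun i j =>
    (i = 0 ∧ j = 1) ∨ (i = 1 ∧ j = 0) ∨ (i = 1 ∧ j = 2) ∨ (i = 2 ∧ j = 3)
  syn_irrefl := by intro i h; fin_cases i <;> simp_all <;> exact absurd h.2 (by decide)

lemma TstepA (x y : ℕ) (hx : x ≠ d + 2) :
    (Tsys d).step ⟨![1,1,x,y], ![0,0,0,0]⟩ = ⟨![1,1,x+1,y], ![0,0,0,0]⟩ := by
  apply ext_config <;> funext i <;> fin_cases i <;>
    simp [SNPSystem.step, SNPSystem.consumed, SNPSystem.recv, SNPSystem.sent,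
      SNPSystem.emits, SNPSystem.nextClk, Tsys, simpleRule, Fin.sum_univ_four, hx] <;> omega

lemma TstepB (y : ℕ) :
    (Tsys d).step ⟨![1,1,d+2,y], ![0,0,0,0]⟩ = ⟨![1,1,1,y+1], ![0,0,0,0]⟩ := by
  apply ext_config <;> funext i <;> fin_cases i <;>
    simp [SNPSystem.step, SNPSystem.consumed, SNPSystem.recv, SNPSystem.sent,
      SNPSystem.emits, SNPSystem.nextClk, Tsys, simpleRule, Fin.sum_univ_four] <;> omega

lemma Tconf_le (t : ℕ) (ht : t ≤ d + 2) :
    (Tsys d).conf t = ⟨![1,1,t,0], ![0,0,0,0]⟩ := by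
  induction t with
  | zero =>
      apply ext_config <;> funext i <;> fin_cases i <;>
        simp [SNPSystem.conf, SNPSystem.initConfig, Tsys]
  | succ k ih =>
      have hk : k ≤ d + 2 := by omega
      have : (Tsys d).conf (k+1) = (Tsys d).step ((Tsys d).conf k) := by
        simp [SNPSystem.conf, Function.iterate_succ_apply']
      rw [this, ih hk, TstepA d k 0 (by omega)]

lemma Tconf_top : (Tsys d).conf (d + 3) = ⟨![1,1,1,1], ![0,0,0,0]⟩ := by
  have : (Tsys d).conf (d+3) = (Tsys d).step ((Tsys d).conf (d+2)) := by
    simp [SNPSystem.conf, Function.iterate_succ_apply']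
  rw [this, Tconf_le d (d+2) le_rfl, TstepB]
end Exp2

section Exp3
open SNPSystem
variable (d : ℕ)

lemma conf_succ {m : ℕ} (S : SNPSystem m) (t : ℕ) :
    S.conf (t+1) = S.step (S.conf t) := by
  simp [SNPSystem.conf, Function.iterate_succ_apply']

lemma Pi_mid (hd : 1 ≤ d) (q j : ℕ) (hj : j ≤ d - 1) :
    ((iterPiB d).step)^[2+j] ⟨![1,0,q], ![0,0,0]⟩ = ⟨![0,0,q], ![0,d-j,0]⟩ := by
  induction j with
  | zero =>
      show (iterPiB d).step ((iterPiB d).step ⟨![1,0,q], ![0,0,0]⟩) = _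
      rw [stepA d q hd, stepB d q hd, Nat.sub_zero]
  | succ k ih =>
      have h2 : (2+(k+1)) = (2+k)+1 := by omega
      rw [h2, Function.iterate_succ_apply', ih (by omega),
        stepC d q (d-k) (by omega), Nat.sub_sub]

lemma Pi_cycle (hd : 1 ≤ d) (q : ℕ) :
    ((iterPiB d).step)^[d+2] ⟨![1,0,q], ![0,0,0]⟩ = ⟨![1,0,q+1], ![0,0,0]⟩ := by
  have h2 : d + 2 = (2+(d-1)) + 1 := by omega
  rw [h2, Function.iterate_succ_apply', Pi_mid d hd q (d-1) le_rfl]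
  have h3 : d - (d-1) = 1 := by omega
  rw [h3, stepD]

lemma Pi_conf_cycle (hd : 1 ≤ d) (k : ℕ) :
    (iterPiB d).conf (k*(d+2)) = ⟨![1,0,k], ![0,0,0]⟩ := by
  induction k with
  | zero =>
      apply ext_config <;> funext i <;> fin_cases i <;>
        simp [SNPSystem.conf, SNPSystem.initConfig, iterPiB]
  | succ n ih =>
      have h2 : (n+1)*(d+2) = (d+2) + n*(d+2) := by ring
      rw [h2]
      show ((iterPiB d).step)^[(d+2) + n*(d+2)] (iterPiB d).initConfig = _
      rw [Function.iterate_add_apply]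
      have : ((iterPiB d).step)^[n*(d+2)] (iterPiB d).initConfig
          = (iterPiB d).conf (n*(d+2)) := rfl
      rw [this, ih, Pi_cycle d hd]

lemma Pi_conf_small (hd : 1 ≤ d) (t : ℕ) (ht : t < d + 2) :
    ((iterPiB d).conf t).n 2 = 0 := by
  rcases t with _ | t
  · simp [SNPSystem.conf, SNPSystem.initConfig, iterPiB]
  rcases t with _ | t
  · have h0 : (iterPiB d).conf 0 = ⟨![1,0,0], ![0,0,0]⟩ := by
      have := Pi_conf_cycle d hd 0
      simpa using this
    rw [conf_succ, h0, stepA d 0 hd]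
    simp
  · -- t+2 with t ≤ d-1
    have h0 : (iterPiB d).conf 0 = ⟨![1,0,0], ![0,0,0]⟩ := by
      have := Pi_conf_cycle d hd 0
      simpa using this
    have h1 : (iterPiB d).conf (t+2) = ((iterPiB d).step)^[2+t] ((iterPiB d).conf 0) := by
      show ((iterPiB d).step)^[t+2] (iterPiB d).initConfig = _
      rw [show t+2 = 2+t by omega]
      rfl
    rw [h1, h0, Pi_mid d hd 0 t (by omega)]
    simp

end Exp3

section Final
open SNPSystem
variable (d : ℕ)

lemma sInf_eq_of {P : ℕ → Prop} {k : ℕ} (h1 : P k) (h2 : ∀ m, m < k → ¬ P m) :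
    sInf {t | P t} = k := by
  refine le_antisymm (Nat.sInf_le h1) ?_
  by_contra h
  push_neg at h
  exact h2 _ h (Nat.sInf_mem ⟨k, h1⟩)

lemma Pi_sink_iff (i : Fin 3) : (iterPiB d).isSink i ↔ i = 2 := by
  constructor
  · intro hs
    fin_cases i <;> simp_all [SNPSystem.isSink, iterPiB]
  · rintro rfl
    constructor
    · intro j; simp [iterPiB]
    · simp [iterPiB]

lemma T_sink_iff (i : Fin 4) : (Tsys d).isSink i ↔ i = 3 := by
  constructor
  · intro hs
    fin_cases i <;> simp_all [SNPSystem.isSink, Tsys]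
  · rintro rfl
    constructor
    · intro j; simp [Tsys]
    · simp [Tsys]

lemma Pi_n2 (t : ℕ) : ((iterPiB d).conf t).n 2 = (((iterPiB d).conf t).n 2) := rfl

lemma Pi_runtime (hd : 1 ≤ d) : (iterPiB d).totalRuntime = 1 + d := by
  unfold SNPSystem.totalRuntime
  have hset : {t | ∀ i, (iterPiB d).isSink i → 1 ≤ ((iterPiB d).conf t).n i}
      = {t | 1 ≤ ((iterPiB d).conf t).n 2} := by
    ext t
    simp only [Set.mem_setOf_eq]
    constructor
    · intro h; exact h 2 ((Pi_sink_iff d 2).mpr rfl)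
    · intro h i hi; rwa [(Pi_sink_iff d i).mp hi]
  rw [hset, sInf_eq_of (k := d + 2)]
  · omega
  · have := Pi_conf_cycle d hd 1
    rw [show 1*(d+2) = d+2 by ring] at this
    rw [this]; decide
  · intro m hm
    rw [Pi_conf_small d hd m hm]
    omega

lemma T_runtime : (Tsys d).totalRuntime = 2 + d := by
  unfold SNPSystem.totalRuntime
  have hset : {t | ∀ i, (Tsys d).isSink i → 1 ≤ ((Tsys d).conf t).n i}
      = {t | 1 ≤ ((Tsys d).conf t).n 3} := by
    ext t
    simp only [Set.mem_setOf_eq]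
    constructor
    · intro h; exact h 3 ((T_sink_iff d 3).mpr rfl)
    · intro h i hi; rwa [(T_sink_iff d i).mp hi]
  rw [hset, sInf_eq_of (k := d + 3)]
  · omega
  · rw [Tconf_top]; decide
  · intro m hm
    rw [Tconf_le d m (by omega)]
    simp

lemma T_shape (t : ℕ) : ∃ x y, (Tsys d).conf t = ⟨![1,1,x,y], ![0,0,0,0]⟩ := by
  induction t with
  | zero =>
      refine ⟨0, 0, ?_⟩
      apply ext_config <;> funext i <;> fin_cases i <;>
        simp [SNPSystem.conf, SNPSystem.initConfig, Tsys]
  | succ k ih =>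
      obtain ⟨x, y, hx⟩ := ih
      rw [conf_succ, hx]
      by_cases h : x = d + 2
      · subst h; exact ⟨1, y+1, TstepB d y⟩
      · exact ⟨x+1, y, TstepA d x y h⟩

end Final

section Final2
open SNPSystem
variable (d : ℕ)

lemma Pi_en0 (hd : 1 ≤ d) (k : ℕ) :
    (iterPiB d).enabled ((iterPiB d).conf (k*(d+2))) 0 := by
  rw [Pi_conf_cycle d hd k]
  exact ⟨rfl, simpleRule 1 1 0 (le_refl 1) (le_refl 1), rfl, rfl, le_refl 1⟩

lemma Pi_en1 (hd : 1 ≤ d) (k : ℕ) :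
    (iterPiB d).enabled ((iterPiB d).conf (k*(d+2)+1)) 1 := by
  rw [conf_succ, Pi_conf_cycle d hd k, stepA d k hd]
  exact ⟨rfl, simpleRule 1 1 d (le_refl 1) (le_refl 1), rfl, rfl, le_refl 1⟩

lemma T_en (t : ℕ) (i : Fin 4) (hi : i = 0 ∨ i = 1) :
    (Tsys d).enabled ((Tsys d).conf t) i := by
  obtain ⟨x, y, h⟩ := T_shape d t
  rw [h]
  rcases hi with rfl | rfl <;>
    exact ⟨rfl, simpleRule 1 1 0 (le_refl 1) (le_refl 1), rfl, rfl, le_refl 1⟩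

lemma T_delayFree : (Tsys d).delayFree := by
  intro i r h
  fin_cases i <;> simp_all [Tsys, simpleRule] <;> subst h <;> rfl

lemma T_final : ((Tsys d).conf ((Tsys d).totalRuntime + 1)).n 3 = 1 := by
  rw [T_runtime, show 2 + d + 1 = d + 3 by omega, Tconf_top]
  rfl

lemma Pi_final (hd : 1 ≤ d) :
    ((iterPiB d).conf ((iterPiB d).totalRuntime + 1)).n 2 = 1 := by
  rw [Pi_runtime d hd, show 1 + d + 1 = 1*(d+2) by ring, Pi_conf_cycle d hd 1]
  rfl

end Final2


theorem iterative_single_delay_simulation (d : ℕ) (hd : 1 ≤ d) :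
    -- σ1 and σ2 continuously replenish one another's spike (infinite iterative loop)
    (∀ t, ∃ t', t ≤ t' ∧ (iterPiB d).enabled ((iterPiB d).conf t') 0) ∧
    (∀ t, ∃ t', t ≤ t' ∧ (iterPiB d).enabled ((iterPiB d).conf t') 1) ∧
    -- the total runtime of Π is 1 + d
    (iterPiB d).totalRuntime = 1 + d ∧
    -- there is a delay-free Π̄ containing an iterative loop of two neurons that
    -- replenish one another's spike, with total runtime 2 + d, whose sink obtains
    -- exactly one spike at that time
    (∃ (m : ℕ) (T : SNPSystem m) (i j snk : Fin m),
      T.delayFree ∧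
      i ≠ j ∧ T.syn i j ∧ T.syn j i ∧
      (∀ t, ∃ t', t ≤ t' ∧ T.enabled (T.conf t') i) ∧
      (∀ t, ∃ t', t ≤ t' ∧ T.enabled (T.conf t') j) ∧
      T.isSink snk ∧ (∀ s, T.isSink s → s = snk) ∧
      T.totalRuntime = 2 + d ∧
      (T.conf (T.totalRuntime + 1)).n snk = 1 ∧
      -- hence Π̄ simulates the iterative routing of Π with a time offset of exactly 1
      T.Simulates (iterPiB d) ∧
      T.totalRuntime = (iterPiB d).totalRuntime + 1) := by
  have hmul : ∀ t : ℕ, t ≤ (t+1)*(d+2) := by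
    intro t
    calc t ≤ t + 1 := by omega
    _ ≤ (t+1)*(d+2) := Nat.le_mul_of_pos_right _ (by omega)
  refine ⟨?_, ?_, Pi_runtime d hd, 4, Tsys d, 0, 1, 3, T_delayFree d, by decide,
    Or.inl ⟨rfl, rfl⟩, Or.inr (Or.inl ⟨rfl, rfl⟩), ?_, ?_,
    (T_sink_iff d 3).mpr rfl, fun s hs => (T_sink_iff d s).mp hs,
    T_runtime d, T_final d, ⟨T_delayFree d, ⟨1, ?_⟩, ?_⟩, ?_⟩
  · intro t; exact ⟨(t+1)*(d+2), hmul t, Pi_en0 d hd (t+1)⟩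
  · intro t
    refine ⟨(t+1)*(d+2)+1, ?_, Pi_en1 d hd (t+1)⟩
    have := hmul t; omega
  · intro t; exact ⟨t, le_rfl, T_en d t 0 (Or.inl rfl)⟩
  · intro t; exact ⟨t, le_rfl, T_en d t 1 (Or.inr rfl)⟩
  · rw [T_runtime d, Pi_runtime d hd]; push_cast; ring
  · intro j hj i hi
    have hj3 := (T_sink_iff d j).mp hj
    have hi2 := (Pi_sink_iff d i).mp hi
    subst hj3; subst hi2
    left
    rw [T_final d, Pi_final d hd]
  · rw [T_runtime d, Pi_runtime d hd]; omega
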